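/- Assume the standing hypotheses (SH). Then the value function u is dominated by L, i.e. u(x′) − u(x) ≤ Φ^Ω_L(x,x′) for all x, x′ ∈ cl Ω; moreover u is Lipschitz continuous on cl Ω and u = g on ∂Ω. -/

import Mathlib

open MeasureTheory Filter Topology Set Metric Bornology
open scoped RealInnerProductSpace NNReal

noncomputable section

namespace HJpaper

abbrev E (n : ℕ) : Type := EuclideanSpace ℝ (Fin n)

variable {n : ℕ}

/-- A nondecreasing, nonnegative, superlinear function on `[0, ∞)`. -/
def Superlinear (θ : ℝ → ℝ) : Prop :=
  MonotoneOn θ (Ici (0 : ℝ)) ∧ (∀ r : ℝ, 0 ≤ r → 0 ≤ θ r) ∧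
    Tendsto (fun r => θ r / r) atTop atTop

/-- Tonelli Lagrangian, with the superlinearity data `θ₁ ≤ L ≤ θ₂` made explicit. -/
structure IsTonelli (L : E n → E n → ℝ) (θ₁ θ₂ : ℝ → ℝ) (c₀ : ℝ) : Prop where
  smooth : ContDiff ℝ 2 (Function.uncurry L)
  hess_pos : ∀ x v w : E n, w ≠ 0 → 0 < fderiv ℝ (fun v' => fderiv ℝ (L x) v') v w w
  sl₁ : Superlinear θ₁
  sl₂ : Superlinear θ₂
  c₀_pos : 0 < c₀
  lower : ∀ x v, θ₁ ‖v‖ - c₀ ≤ L x v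
  upper : ∀ x v, L x v ≤ θ₂ ‖v‖

/-- A `W^{1,1}` arc with values in `S`, from `x` at time `a` to `y` at time `b`,
with (a.e.) derivative `ξ'`. -/
structure ArcOn (S : Set (E n)) (a b : ℝ) (x y : E n) (ξ ξ' : ℝ → E n) : Prop where
  intg : IntervalIntegrable ξ' volume a b
  rep : ∀ t ∈ Icc a b, ξ t = x + ∫ s in a..t, ξ' s
  mem : ∀ t ∈ Icc a b, ξ t ∈ S
  start : ξ a = x
  last : ξ b = y

/-- The set of (finite) actions of arcs in `S` from `(a,x)` to `(b,y)`. -/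
def actionSet (L : E n → E n → ℝ) (S : Set (E n)) (a b : ℝ) (x y : E n) : Set ℝ :=
  {v | ∃ ξ ξ' : ℝ → E n, ArcOn S a b x y ξ ξ' ∧
    IntervalIntegrable (fun s => L (ξ s) (ξ' s)) volume a b ∧
    v = ∫ s in a..b, L (ξ s) (ξ' s)}

/-- The relative fundamental solution `A^Ω_t(x,y)`. -/
def fundSol (L : E n → E n → ℝ) (Ω : Set (E n)) (t : ℝ) (x y : E n) : ℝ :=
  sInf (actionSet L (closure Ω) 0 t x y)

/-- A minimizer, on the time interval `[a,b]`, of `A^Ω_{b-a}(x,y)`. -/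
def IsMinimizer (L : E n → E n → ℝ) (Ω : Set (E n)) (a b : ℝ) (x y : E n)
    (ξ ξ' : ℝ → E n) : Prop :=
  ArcOn (closure Ω) a b x y ξ ξ' ∧
    IntervalIntegrable (fun s => L (ξ s) (ξ' s)) volume a b ∧
    (∫ s in a..b, L (ξ s) (ξ' s)) = fundSol L Ω (b - a) x y

/-- The set `⋃_{t>0} actionSet`, whose infimum is the relative Mañé potential. -/
def phiSet (L : E n → E n → ℝ) (Ω : Set (E n)) (x y : E n) : Set ℝ :=
  {v | ∃ t : ℝ, 0 < t ∧ v ∈ actionSet L (closure Ω) 0 t x y}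

/-- The relative Mañé potential `Φ^Ω_L(x,y) = inf_{t>0} A^Ω_t(x,y)` (real-valued version). -/
def manePot (L : E n → E n → ℝ) (Ω : Set (E n)) (x y : E n) : ℝ :=
  sInf (phiSet L Ω x y)

/-- The relative Mañé potential with values in `EReal` (so the value `-∞` is meaningful). -/
def manePotE (L : E n → E n → ℝ) (Ω : Set (E n)) (x y : E n) : EReal :=
  sInf ((fun v : ℝ => (v : EReal)) '' phiSet L Ω x y)

/-- The relative Mañé critical value `c_Ω(L) = - inf { A^Ω_t(x,x)/t }`. -/
def critValue (L : E n → E n → ℝ) (Ω : Set (E n)) : ℝ :=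
  - sInf {v : ℝ | ∃ t : ℝ, 0 < t ∧ ∃ x ∈ closure Ω, v = (1 / t) * fundSol L Ω t x x}

/-- The value function `u(x) = inf_{y ∈ ∂Ω} ( g(y) + Φ^Ω_L(y,x) )`. -/
def valueFun (L : E n → E n → ℝ) (Ω : Set (E n)) (g : E n → ℝ) (x : E n) : ℝ :=
  sInf ((fun y => g y + manePot L Ω y x) '' frontier Ω)

/-- `C`-quasiconvexity of the domain `Ω`. -/
def IsQuasiconvex (C : ℝ) (Ω : Set (E n)) : Prop :=
  ∀ x ∈ closure Ω, ∀ y ∈ closure Ω, x ≠ y →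
    ∃ (T : ℝ) (ξ ξ' : ℝ → E n), 0 < T ∧ T ≤ C * ‖x - y‖ ∧
      ArcOn (closure Ω) 0 T x y ξ ξ' ∧
      ∀ᵐ s ∂(volume : Measure ℝ), s ∈ Icc 0 T → ‖ξ' s‖ = 1

/-- `∂Ω` is locally the graph of a Lipschitz function (with `Ω` locally the subgraph). -/
def HasLipschitzBoundary (Ω : Set (E n)) : Prop :=
  ∀ x ∈ frontier Ω, ∃ v : E n, ‖v‖ = 1 ∧ ∃ r : ℝ, 0 < r ∧ ∃ (K : ℝ≥0) (φ : E n → ℝ),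
    LipschitzWith K φ ∧ ∀ y ∈ ball x r, (y ∈ Ω ↔ ⟪y, v⟫ < φ (y - ⟪y, v⟫ • v))

/-- `∂Ω` is locally the graph of a `C²` function (with `Ω` locally the subgraph). -/
def HasC2Boundary (Ω : Set (E n)) : Prop :=
  ∀ x ∈ frontier Ω, ∃ v : E n, ‖v‖ = 1 ∧ ∃ r : ℝ, 0 < r ∧ ∃ φ : E n → ℝ,
    ContDiff ℝ 2 φ ∧ ∀ y ∈ ball x r, (y ∈ Ω ↔ ⟪y, v⟫ < φ (y - ⟪y, v⟫ • v))

/-- A `u`-calibrated arc in `cl Ω` from `x` at time `a` to `y` at time `b`. -/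
def CalibratedArc (L : E n → E n → ℝ) (Ω : Set (E n)) (u : E n → ℝ) (a b : ℝ)
    (x y : E n) (ξ ξ' : ℝ → E n) : Prop :=
  ArcOn (closure Ω) a b x y ξ ξ' ∧
    IntervalIntegrable (fun s => L (ξ s) (ξ' s)) volume a b ∧
    u y - u x = ∫ s in a..b, L (ξ s) (ξ' s)

/-- A `u`-calibrated curve on `(-∞,0]` ending at `x`. -/
def CalCurveInf (L : E n → E n → ℝ) (Ω : Set (E n)) (u : E n → ℝ) (x : E n)
    (ξ ξ' : ℝ → E n) : Prop :=
  ξ 0 = x ∧ ∀ a : ℝ, a < 0 → CalibratedArc L Ω u a 0 (ξ a) x ξ ξ'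

/-- The singular set of `u` in `Ω`. -/
def singSet (u : E n → ℝ) (Ω : Set (E n)) : Set (E n) :=
  {x ∈ Ω | ¬ DifferentiableAt ℝ u x}

/-- The cut locus of `u`: points of `Ω` that only occur as final points of calibrated curves. -/
def cutLocus (L : E n → E n → ℝ) (Ω : Set (E n)) (u : E n → ℝ) : Set (E n) :=
  {x ∈ Ω | ∀ (a b : ℝ) (p q : E n) (ξ ξ' : ℝ → E n), a < b →
    CalibratedArc L Ω u a b p q ξ ξ' → ∀ s ∈ Icc a b, ξ s = x → ξ b = x}

/-- All boundary hitting times of `u`-calibrated curves ending at `x`;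
its infimum is the exit time `T(x)`. -/
def exitTimeSet (L : E n → E n → ℝ) (Ω : Set (E n)) (u : E n → ℝ) (x : E n) : Set ℝ :=
  {s | 0 ≤ s ∧ ∃ ξ ξ' : ℝ → E n, ξ 0 = x ∧ ξ (-s) ∈ frontier Ω ∧
    ((∃ a : ℝ, a ≤ -s ∧ a < 0 ∧ CalibratedArc L Ω u a 0 (ξ a) x ξ ξ') ∨
      CalCurveInf L Ω u x ξ ξ')}

/-- The exit time function `T(x)`. -/
def exitTime (L : E n → E n → ℝ) (Ω : Set (E n)) (u : E n → ℝ) (x : E n) : ℝ :=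
  sInf (exitTimeSet L Ω u x)

/-- The (Dini) superdifferential `D⁺u(x)`. -/
def superDiff (u : E n → ℝ) (x : E n) : Set (E n) :=
  {p | ∀ ε : ℝ, 0 < ε → ∃ δ : ℝ, 0 < δ ∧ ∀ y : E n, ‖y - x‖ < δ →
    u y - u x - ⟪p, y - x⟫ ≤ ε * ‖y - x‖}

/-- The set `D*u(x)` of reachable (limiting) gradients of `u` at `x`. -/
def reachGrad (u : E n → ℝ) (x : E n) : Set (E n) :=
  {p | ∃ xk : ℕ → E n, (∀ k, xk k ≠ x ∧ DifferentiableAt ℝ u (xk k)) ∧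
    Tendsto xk atTop (𝓝 x) ∧ Tendsto (fun k => gradient u (xk k)) atTop (𝓝 p)}

/-- The Hamiltonian associated with `L`: `H(x,p) = sup_v (⟨p,v⟩ - L(x,v))`. -/
def Ham (L : E n → E n → ℝ) (x p : E n) : ℝ :=
  sSup (Set.range fun v : E n => ⟪p, v⟫ - L x v)

/-- Semiconcavity (with linear modulus) with constant `C` on `S`. -/
def SemiconcaveWith (S : Set (E n)) (f : E n → ℝ) (C : ℝ) : Prop :=
  ∀ x ∈ S, ∀ y ∈ S, segment ℝ x y ⊆ S → ∀ l : ℝ, l ∈ Icc (0 : ℝ) 1 →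
    l * f x + (1 - l) * f y - f (l • x + (1 - l) • y) ≤ C / 2 * (l * (1 - l)) * ‖x - y‖ ^ 2

/-- Local semiconcavity on an open set `S`. -/
def LocallySemiconcaveOn (S : Set (E n)) (f : E n → ℝ) : Prop :=
  ∀ x ∈ S, ∃ r : ℝ, 0 < r ∧ ball x r ⊆ S ∧ ∃ C : ℝ, SemiconcaveWith (ball x r) f C

/-- `C^{1,1}_loc` regularity on `S`: differentiable with locally Lipschitz gradient. -/
def C11On (S : Set (E n)) (f : E n → ℝ) : Prop :=
  (∀ y ∈ S, DifferentiableAt ℝ f y) ∧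
    ∀ y ∈ S, ∃ r : ℝ, 0 < r ∧ ∃ M : ℝ≥0,
      LipschitzOnWith M (fun z => gradient f z) (ball y r ∩ S)

/-- The Legendre transform `θ*(k) = sup_{r ≥ 0} (k r - θ(r))`. -/
def legendre (θ : ℝ → ℝ) (k : ℝ) : ℝ :=
  sSup {v : ℝ | ∃ r : ℝ, 0 ≤ r ∧ v = k * r - θ r}

/-- A generalized characteristic of `H(x,Du)=0` on the time set `I`:
a Lipschitz arc in `Ω` with `γ'(s) ∈ co H_p(γ(s), D⁺u(γ(s)))` a.e. -/
def GenChar (L : E n → E n → ℝ) (Ω : Set (E n)) (u : E n → ℝ) (I : Set ℝ)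
    (γ : ℝ → E n) : Prop :=
  (∀ s ∈ I, γ s ∈ Ω) ∧ (∃ K : ℝ≥0, LipschitzOnWith K γ I) ∧
    ∀ᵐ s ∂(volume.restrict I), ∃ v : E n, HasDerivWithinAt γ v I s ∧
      v ∈ convexHull ℝ ((fun p => gradient (Ham L (γ s)) p) '' superDiff u (γ s))

set_option linter.unusedSectionVars false

section Glue

variable {F : Type*} [NormedAddCommGroup F]

/-- Glue two functions, the second delayed by time `a`. -/
def glue (a : ℝ) (f g : ℝ → F) : ℝ → F := fun s => if s ≤ a then f s else g (s - a)

lemma glue_eq_left {a : ℝ} {f g : ℝ → F} {s : ℝ} (h : s ≤ a) : glue a f g s = f s :=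
  if_pos h

lemma glue_eq_right {a : ℝ} {f g : ℝ → F} {s : ℝ} (h : a < s) : glue a f g s = g (s - a) :=
  if_neg (not_le.2 h)

lemma glue_comp {G H : Type*} [NormedAddCommGroup G] [NormedAddCommGroup H]
    (Φ : F → G → H) (a : ℝ) (f₁ g₁ : ℝ → F) (f₂ g₂ : ℝ → G) :
    (fun s => Φ (glue a f₁ g₁ s) (glue a f₂ g₂ s)) =
      glue a (fun s => Φ (f₁ s) (f₂ s)) (fun s => Φ (g₁ s) (g₂ s)) := by
  funext s
  by_cases h : s ≤ a
  · simp [glue, h]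
  · simp [glue, h]

lemma glue_intervalIntegrable_left {a : ℝ} (ha : 0 ≤ a) {f g : ℝ → F}
    (hf : IntervalIntegrable f volume 0 a) :
    IntervalIntegrable (glue a f g) volume 0 a := by
  apply hf.congr
  intro s hs
  exact (glue_eq_left (Set.uIoc_of_le ha ▸ hs).2).symm

lemma glue_intervalIntegrable_right {a b : ℝ} (hb : 0 ≤ b) {f g : ℝ → F}
    (hg : IntervalIntegrable g volume 0 b) :
    IntervalIntegrable (glue a f g) volume a (a + b) := by
  have h1 : IntervalIntegrable (fun s => g (s - a)) volume a (a + b) := by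
    simpa [zero_add, add_comm] using hg.comp_sub_right a
  apply h1.congr
  intro s hs
  have h2 : Set.uIoc a (a + b) = Set.Ioc a (a + b) := Set.uIoc_of_le (by linarith)
  rw [h2] at hs
  exact (glue_eq_right hs.1).symm

lemma glue_intervalIntegrable {a b : ℝ} (ha : 0 ≤ a) (hb : 0 ≤ b) {f g : ℝ → F}
    (hf : IntervalIntegrable f volume 0 a) (hg : IntervalIntegrable g volume 0 b) :
    IntervalIntegrable (glue a f g) volume 0 (a + b) :=
  (glue_intervalIntegrable_left ha hf).trans (glue_intervalIntegrable_right hb hg)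

variable [NormedSpace ℝ F] [CompleteSpace F]

lemma glue_integral_left {a t : ℝ} (ht0 : 0 ≤ t) (ht : t ≤ a) {f g : ℝ → F} :
    ∫ s in (0:ℝ)..t, glue a f g s = ∫ s in (0:ℝ)..t, f s := by
  apply intervalIntegral.integral_congr
  intro s hs
  rw [Set.uIcc_of_le ht0] at hs
  exact glue_eq_left (le_trans hs.2 ht)

lemma glue_integral_right {a b t : ℝ} (ha : 0 ≤ a) (ht : a ≤ t) (htb : t ≤ a + b)
    {f g : ℝ → F} (hf : IntervalIntegrable f volume 0 a)
    (hg : IntervalIntegrable g volume 0 b) :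
    ∫ s in (0:ℝ)..t, glue a f g s
      = (∫ s in (0:ℝ)..a, f s) + ∫ s in (0:ℝ)..(t - a), g s := by
  have hb : 0 ≤ b := by linarith
  have hI1 : IntervalIntegrable (glue a f g) volume 0 a :=
    glue_intervalIntegrable_left ha hf
  have hI2 : IntervalIntegrable (glue a f g) volume a t :=
    (glue_intervalIntegrable_right hb hg).mono_set (by
      rw [Set.uIcc_of_le ht, Set.uIcc_of_le (by linarith : a ≤ a + b)]
      exact Set.Icc_subset_Icc le_rfl htb)
  rw [← intervalIntegral.integral_add_adjacent_intervals hI1 hI2]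
  congr 1
  · exact glue_integral_left ha le_rfl
  · have h1 : (∫ s in a..t, glue a f g s) = ∫ s in a..t, g (s - a) := by
      apply intervalIntegral.integral_congr_ae
      apply Filter.Eventually.of_forall
      intro s hs
      have h2 : Set.uIoc a t = Set.Ioc a t := Set.uIoc_of_le ht
      rw [h2] at hs
      exact glue_eq_right hs.1
    rw [h1, intervalIntegral.integral_comp_sub_right g a, sub_self]

end Glue
section Arcs

variable {n : ℕ}

/-- Concatenation of arcs. -/
lemma ArcOn.glue_arc {S : Set (E n)} {a b : ℝ} (ha : 0 ≤ a) (hb : 0 ≤ b)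
    {x y z : E n} {ξ₁ ξ₁' ξ₂ ξ₂' : ℝ → E n}
    (h₁ : ArcOn S 0 a x y ξ₁ ξ₁') (h₂ : ArcOn S 0 b y z ξ₂ ξ₂') :
    ArcOn S 0 (a + b) x z (glue a ξ₁ ξ₂) (glue a ξ₁' ξ₂') := by
  constructor
  · exact glue_intervalIntegrable ha hb h₁.intg h₂.intg
  · intro t ht
    obtain ⟨ht0, ht1⟩ := ht
    rcases le_or_gt t a with hta | hta
    · rw [glue_eq_left hta, glue_integral_left ht0 hta]
      exact h₁.rep t ⟨ht0, hta⟩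
    · rw [glue_eq_right hta, glue_integral_right ha hta.le ht1 h₁.intg h₂.intg]
      have e1 : (∫ s in (0:ℝ)..a, ξ₁' s) = y - x := by
        have := h₁.rep a ⟨ha, le_rfl⟩
        rw [h₁.last] at this
        rw [this]; abel
      have e2 : ξ₂ (t - a) = y + ∫ s in (0:ℝ)..(t - a), ξ₂' s :=
        h₂.rep (t - a) ⟨by linarith, by linarith⟩
      rw [e1, e2]; abel
  · intro t ht
    obtain ⟨ht0, ht1⟩ := ht
    rcases le_or_gt t a with hta | hta
    · rw [glue_eq_left hta]; exact h₁.mem t ⟨ht0, hta⟩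
    · rw [glue_eq_right hta]; exact h₂.mem (t - a) ⟨by linarith, by linarith⟩
  · rw [glue_eq_left ha, h₁.start]
  · rcases eq_or_lt_of_le hb with hb0 | hb0
    · have hyz : y = z := by
        have h1 := h₂.start; have h2 := h₂.last
        rw [← hb0] at h2; rw [h1] at h2; exact h2
      rw [glue_eq_left (by linarith), ← hb0, add_zero, h₁.last, hyz]
    · rw [glue_eq_right (by linarith), add_sub_cancel_left, h₂.last]

/-- Concatenation of actions. -/
lemma actionSet_add {L : E n → E n → ℝ} {S : Set (E n)} {t s : ℝ}
    (ht : 0 ≤ t) (hs : 0 ≤ s) {x y z : E n} {v w : ℝ}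
    (hv : v ∈ actionSet L S 0 t x y) (hw : w ∈ actionSet L S 0 s y z) :
    v + w ∈ actionSet L S 0 (t + s) x z := by
  obtain ⟨ξ₁, ξ₁', h₁, hi₁, rfl⟩ := hv
  obtain ⟨ξ₂, ξ₂', h₂, hi₂, rfl⟩ := hw
  refine ⟨glue t ξ₁ ξ₂, glue t ξ₁' ξ₂', h₁.glue_arc ht hs h₂, ?_, ?_⟩
  · rw [glue_comp L t ξ₁ ξ₂ ξ₁' ξ₂']
    exact glue_intervalIntegrable ht hs hi₁ hi₂
  · rw [glue_comp L t ξ₁ ξ₂ ξ₁' ξ₂',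
      glue_integral_right ht (by linarith) le_rfl hi₁ hi₂, add_sub_cancel_left]

/-- Time reversal of an arc. -/
lemma ArcOn.reverse {S : Set (E n)} {T : ℝ} (hT : 0 ≤ T) {p q : E n} {ξ ξ' : ℝ → E n}
    (h : ArcOn S 0 T p q ξ ξ') :
    ArcOn S 0 T q p (fun s => ξ (T - s)) (fun s => -ξ' (T - s)) := by
  have hint : IntervalIntegrable (fun s => ξ' (T - s)) volume 0 T := by
    have := (h.intg.comp_sub_left T)
    simpa [sub_self, sub_zero] using this.symm
  constructor
  · exact hint.neg
  · intro t ht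
    have hIT : (∫ s in (0:ℝ)..T, ξ' s) = q - p := by
      have := h.rep T ⟨hT, le_rfl⟩
      rw [h.last] at this; rw [this]; abel
    have hIt : (∫ s in (0:ℝ)..(T - t), ξ' s) = ξ (T - t) - p := by
      have := h.rep (T - t) ⟨by linarith [ht.2], by linarith [ht.1]⟩
      rw [this]; abel
    have hsplit : (∫ s in (0:ℝ)..(T - t), ξ' s) + (∫ s in (T - t)..T, ξ' s)
        = ∫ s in (0:ℝ)..T, ξ' s := by
      apply intervalIntegral.integral_add_adjacent_intervals
      · exact h.intg.mono_set (by
          rw [Set.uIcc_of_le (by linarith [ht.2] : (0:ℝ) ≤ T - t), Set.uIcc_of_le hT]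
          exact Set.Icc_subset_Icc le_rfl (by linarith [ht.1]))
      · exact h.intg.mono_set (by
          rw [Set.uIcc_of_le (by linarith [ht.1] : T - t ≤ T), Set.uIcc_of_le hT]
          exact Set.Icc_subset_Icc (by linarith [ht.2]) le_rfl)
    have hcomp : (∫ s in (0:ℝ)..t, ξ' (T - s)) = ∫ s in (T - t)..T, ξ' s := by
      have := intervalIntegral.integral_comp_sub_left (a := (0:ℝ)) (b := t) ξ' T
      simpa [sub_zero] using this
    rw [intervalIntegral.integral_neg, hcomp]
    have : (∫ s in (T - t)..T, ξ' s) = (q - p) - (ξ (T - t) - p) := by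
      rw [← hIT, ← hsplit, hIt]; abel
    rw [this]; abel
  · intro t ht
    exact h.mem (T - t) ⟨by linarith [ht.2], by linarith [ht.1]⟩

  · simp only [sub_zero]; exact h.last
  · simp only [sub_self]; exact h.start

/-- An arc with speed at most one. -/
def Join (S : Set (E n)) (y z : E n) (T : ℝ) : Prop :=
  ∃ ξ ξ' : ℝ → E n, ArcOn S 0 T y z ξ ξ' ∧ ∀ s, ‖ξ' s‖ ≤ 1

lemma Join.refl {S : Set (E n)} {x : E n} (hx : x ∈ S) : Join S x x 0 := by
  refine ⟨fun _ => x, fun _ => 0, ⟨intervalIntegrable_const, ?_, fun t _ => hx, rfl, rfl⟩,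
    fun s => by simp⟩
  intro t ht
  simp

lemma Join.eq_of_zero {S : Set (E n)} {y z : E n} (h : Join S y z 0) : y = z := by
  obtain ⟨ξ, ξ', harc, -⟩ := h
  rw [← harc.start, ← harc.last]

lemma Join.trans {S : Set (E n)} {x y z : E n} {a b : ℝ} (ha : 0 ≤ a) (hb : 0 ≤ b)
    (h₁ : Join S x y a) (h₂ : Join S y z b) : Join S x z (a + b) := by
  obtain ⟨ξ₁, ξ₁', harc₁, hn₁⟩ := h₁
  obtain ⟨ξ₂, ξ₂', harc₂, hn₂⟩ := h₂
  refine ⟨glue a ξ₁ ξ₂, glue a ξ₁' ξ₂', harc₁.glue_arc ha hb harc₂, fun s => ?_⟩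
  by_cases h : s ≤ a
  · rw [glue_eq_left h]; exact hn₁ s
  · rw [glue_eq_right (not_le.1 h)]; exact hn₂ (s - a)

lemma Join.symm {S : Set (E n)} {y z : E n} {T : ℝ} (hT : 0 ≤ T) (h : Join S y z T) :
    Join S z y T := by
  obtain ⟨ξ, ξ', harc, hn⟩ := h
  exact ⟨_, _, harc.reverse hT, fun s => by simpa using hn (T - s)⟩

/-- Straight-segment join. -/
lemma join_segment {S : Set (E n)} {y z : E n} (hne : y ≠ z)
    (h : ∀ t ∈ Icc (0:ℝ) 1, y + t • (z - y) ∈ S) :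
    Join S y z ‖z - y‖ := by
  have hzy : (0:ℝ) < ‖z - y‖ := by
    rw [norm_pos_iff, sub_ne_zero]; exact fun hh => hne hh.symm
  refine ⟨fun s => y + (s / ‖z - y‖) • (z - y), fun _ => ‖z - y‖⁻¹ • (z - y), ?_, ?_⟩
  · constructor
    · exact intervalIntegrable_const
    · intro t ht
      rw [intervalIntegral.integral_const]
      rw [sub_zero, smul_smul, div_eq_mul_inv]
    · intro t ht
      refine h (t / ‖z - y‖) ⟨div_nonneg ht.1 hzy.le, ?_⟩
      rw [div_le_one hzy]; exact ht.2
    · simp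
    · rw [div_self hzy.ne', one_smul]; abel
  · intro s
    rw [norm_smul, norm_inv, norm_norm, inv_mul_cancel₀ hzy.ne']

end Arcs
section Action

variable {n : ℕ}

/-- Linear minorant of a superlinear function. -/
lemma Superlinear.exists_minorant {θ : ℝ → ℝ} (h : Superlinear θ) :
    ∃ M : ℝ, 0 ≤ M ∧ ∀ r : ℝ, 0 ≤ r → r - M ≤ θ r := by
  obtain ⟨-, hpos, htend⟩ := h
  obtain ⟨R, hR⟩ := (Filter.tendsto_atTop.1 htend 1).exists_forall_of_atTop
  refine ⟨max R 1, le_trans zero_le_one (le_max_right _ _), fun r hr => ?_⟩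
  rcases le_or_gt r (max R 1) with h1 | h1
  · have := hpos r hr
    linarith
  · have hrR : R ≤ r := le_trans (le_max_left _ _) h1.le
    have hr1 : (1:ℝ) < r := lt_of_le_of_lt (le_max_right _ _) h1
    have := hR r hrR
    rw [le_div_iff₀ (by linarith)] at this
    nlinarith [le_max_right R 1]

/-- Lower bound for the action of any admissible arc. -/
lemma action_lower_bound {L : E n → E n → ℝ} {θ₁ θ₂ : ℝ → ℝ} {c₀ : ℝ}
    (hL : IsTonelli L θ₁ θ₂ c₀) {M : ℝ} (hM : ∀ r : ℝ, 0 ≤ r → r - M ≤ θ₁ r)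
    {S : Set (E n)} {t : ℝ} (ht : 0 ≤ t) {x y : E n} {v : ℝ}
    (hv : v ∈ actionSet L S 0 t x y) :
    ‖y - x‖ - (M + c₀) * t ≤ v := by
  obtain ⟨ξ, ξ', harc, hint, rfl⟩ := hv
  have hmono : (∫ s in (0:ℝ)..t, (‖ξ' s‖ - (M + c₀))) ≤ ∫ s in (0:ℝ)..t, L (ξ s) (ξ' s) := by
    apply intervalIntegral.integral_mono_on ht _ hint
    · intro s _
      have h1 := hL.lower (ξ s) (ξ' s)
      have h2 := hM ‖ξ' s‖ (norm_nonneg _)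
      linarith
    · exact harc.intg.norm.sub intervalIntegrable_const
  have hsplit : (∫ s in (0:ℝ)..t, (‖ξ' s‖ - (M + c₀)))
      = (∫ s in (0:ℝ)..t, ‖ξ' s‖) - (M + c₀) * t := by
    rw [intervalIntegral.integral_sub harc.intg.norm intervalIntegrable_const,
      intervalIntegral.integral_const, sub_zero, smul_eq_mul, mul_comm]
  have hxy : (∫ s in (0:ℝ)..t, ξ' s) = y - x := by
    have := harc.rep t ⟨ht, le_rfl⟩
    rw [harc.last] at this; rw [this]; abel
  have hnorm : ‖y - x‖ ≤ ∫ s in (0:ℝ)..t, ‖ξ' s‖ := by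
    rw [← hxy]
    exact intervalIntegral.norm_integral_le_integral_norm ht
  linarith

/-- Under `c_Ω(L) ≤ 0`, closed loops have nonnegative action. -/
lemma loop_action_nonneg {L : E n → E n → ℝ} {θ₁ θ₂ : ℝ → ℝ} {c₀ : ℝ} {Ω : Set (E n)}
    (hL : IsTonelli L θ₁ θ₂ c₀) {M : ℝ} (hM0 : 0 ≤ M)
    (hM : ∀ r : ℝ, 0 ≤ r → r - M ≤ θ₁ r) (hc : critValue L Ω ≤ 0)
    {t : ℝ} (ht : 0 < t) {x : E n} (hx : x ∈ closure Ω) {v : ℝ}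
    (hv : v ∈ actionSet L (closure Ω) 0 t x x) : 0 ≤ v := by
  have hbddA : ∀ s : ℝ, 0 < s → ∀ z : E n,
      BddBelow (actionSet L (closure Ω) 0 s z z) := by
    intro s hs z
    refine ⟨-(M + c₀) * s, fun w hw => ?_⟩
    have := action_lower_bound hL hM hs.le hw
    simp only [sub_self, norm_zero] at this
    linarith
  have hfund : ∀ s : ℝ, 0 < s → ∀ z : E n, -(M + c₀) * s ≤ fundSol L Ω s z z := by
    intro s hs z
    rcases Set.eq_empty_or_nonempty (actionSet L (closure Ω) 0 s z z) with he | hne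
    · rw [fundSol, he, Real.sInf_empty]
      have : 0 < M + c₀ := by linarith [hL.c₀_pos]
      nlinarith
    · apply le_csInf hne
      intro w hw
      have := action_lower_bound hL hM hs.le hw
      simp only [sub_self, norm_zero] at this
      linarith
  set crit : Set ℝ := {v : ℝ | ∃ t : ℝ, 0 < t ∧ ∃ x ∈ closure Ω, v = (1 / t) * fundSol L Ω t x x}
    with hcrit
  have hbddc : BddBelow crit := by
    refine ⟨-(M + c₀), fun w hw => ?_⟩
    obtain ⟨s, hs, z, hz, rfl⟩ := hw
    have h1 := hfund s hs z
    rw [one_div, inv_mul_eq_div, le_div_iff₀ hs]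
    linarith [mul_pos hs hs]
  have hsInf : 0 ≤ sInf crit := by
    have : critValue L Ω = -sInf crit := rfl
    linarith [hc, this ▸ hc]
  have hmem : (1 / t) * fundSol L Ω t x x ∈ crit := ⟨t, ht, x, hx, rfl⟩
  have h0 : 0 ≤ (1 / t) * fundSol L Ω t x x := le_trans hsInf (csInf_le hbddc hmem)
  have h1 : 0 ≤ fundSol L Ω t x x := by
    by_contra hneg
    push_neg at hneg
    have : (1 / t) * fundSol L Ω t x x < 0 :=
      mul_neg_of_pos_of_neg (by positivity) hneg
    linarith
  exact le_trans h1 (csInf_le (hbddA t ht x) hv)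

end Action
section Phi

variable {n : ℕ} {L : E n → E n → ℝ} {θ₁ θ₂ : ℝ → ℝ} {c₀ : ℝ} {Ω : Set (E n)}

/-- A unit-speed join gives an element of the action set with controlled action. -/
lemma join_action (hL : IsTonelli L θ₁ θ₂ c₀) {x y : E n} {T : ℝ}
    (hT : 0 < T) (hJ : Join (closure Ω) x y T) :
    ∃ a ∈ actionSet L (closure Ω) 0 T x y, a ≤ T * θ₂ 1 := by
  obtain ⟨ξ, ξ', harc, hn⟩ := hJ
  have hmeasξ' : AEStronglyMeasurable ξ' (volume.restrict (Set.Ioc 0 T)) := by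
    have h := harc.intg.def'
    rw [Set.uIoc_of_le hT.le] at h
    exact h.aestronglyMeasurable
  have hprim : ContinuousOn (fun b => ∫ s in (0:ℝ)..b, ξ' s) (Set.uIcc 0 T) :=
    intervalIntegral.continuousOn_primitive_interval' harc.intg Set.left_mem_uIcc
  have hmeasξ : AEStronglyMeasurable ξ (volume.restrict (Set.Ioc 0 T)) := by
    have hc : ContinuousOn (fun b => x + ∫ s in (0:ℝ)..b, ξ' s) (Set.uIcc 0 T) :=
      continuousOn_const.add hprim
    have h1 : AEStronglyMeasurable (fun b => x + ∫ s in (0:ℝ)..b, ξ' s)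
        (volume.restrict (Set.Ioc 0 T)) := by
      apply ContinuousOn.aestronglyMeasurable (hc.mono ?_) measurableSet_Ioc
      rw [Set.uIcc_of_le hT.le]; exact Set.Ioc_subset_Icc_self
    apply h1.congr
    filter_upwards [MeasureTheory.ae_restrict_mem measurableSet_Ioc] with s hs
    exact (harc.rep s ⟨hs.1.le, hs.2⟩).symm
  have hmeasL : AEStronglyMeasurable (fun s => L (ξ s) (ξ' s))
      (volume.restrict (Set.Ioc 0 T)) := by
    have hcont : Continuous (Function.uncurry L) := hL.smooth.continuous
    exact hcont.comp_aestronglyMeasurable (hmeasξ.prodMk hmeasξ')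
  have hub : ∀ s : ℝ, L (ξ s) (ξ' s) ≤ θ₂ 1 := by
    intro s
    refine le_trans (hL.upper (ξ s) (ξ' s)) ?_
    exact hL.sl₂.1 (Set.mem_Ici.2 (norm_nonneg _)) (Set.mem_Ici.2 zero_le_one) (hn s)
  have hlb : ∀ s : ℝ, -c₀ ≤ L (ξ s) (ξ' s) := by
    intro s
    have h1 := hL.lower (ξ s) (ξ' s)
    have h2 := hL.sl₁.2.1 ‖ξ' s‖ (norm_nonneg _)
    linarith
  have hint : IntervalIntegrable (fun s => L (ξ s) (ξ' s)) volume 0 T := by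
    rw [intervalIntegrable_iff_integrableOn_Ioc_of_le hT.le]
    refine Integrable.mono' (g := fun _ => max c₀ (θ₂ 1))
      (integrableOn_const measure_Ioc_lt_top.ne (by simp)) hmeasL ?_
    apply Filter.Eventually.of_forall
    intro s
    rw [Real.norm_eq_abs, abs_le]
    constructor
    · have := hlb s; have := le_max_left c₀ (θ₂ 1); linarith
    · exact le_trans (hub s) (le_max_right _ _)
  refine ⟨_, ⟨ξ, ξ', harc, hint, rfl⟩, ?_⟩
  calc (∫ s in (0:ℝ)..T, L (ξ s) (ξ' s)) ≤ ∫ s in (0:ℝ)..T, θ₂ 1 :=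
        intervalIntegral.integral_mono_on hT.le hint intervalIntegrable_const
          (fun s _ => hub s)
    _ = T * θ₂ 1 := by rw [intervalIntegral.integral_const, sub_zero, smul_eq_mul]

/-- The constant arc contributes `t * L x 0` to `phiSet x x`. -/
lemma const_mem_phiSet {x : E n} (hx : x ∈ closure Ω) {t : ℝ} (ht : 0 < t) :
    t * L x 0 ∈ phiSet L Ω x x := by
  refine ⟨t, ht, fun _ => x, fun _ => 0, ?_, intervalIntegrable_const, ?_⟩
  · exact ⟨intervalIntegrable_const, fun s _ => by simp, fun s _ => hx, rfl, rfl⟩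
  · rw [intervalIntegral.integral_const, sub_zero, smul_eq_mul]

/-- Concatenation for the Mañé potential sets. -/
lemma phiSet_add {x y z : E n} {v w : ℝ}
    (hv : v ∈ phiSet L Ω x y) (hw : w ∈ phiSet L Ω y z) :
    v + w ∈ phiSet L Ω x z := by
  obtain ⟨t, ht, hv⟩ := hv
  obtain ⟨s, hs, hw⟩ := hw
  exact ⟨t + s, by linarith, actionSet_add ht.le hs.le hv hw⟩

/-- Loop elements of the Mañé potential set are nonnegative. -/
lemma phiSet_self_nonneg (hL : IsTonelli L θ₁ θ₂ c₀) {M : ℝ} (hM0 : 0 ≤ M)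
    (hM : ∀ r : ℝ, 0 ≤ r → r - M ≤ θ₁ r) (hc : critValue L Ω ≤ 0)
    {x : E n} (hx : x ∈ closure Ω) {v : ℝ} (hv : v ∈ phiSet L Ω x x) : 0 ≤ v := by
  obtain ⟨t, ht, hv⟩ := hv
  exact loop_action_nonneg hL hM0 hM hc ht hx hv

end Phi
set_option maxHeartbeats 1000000

section Geometry

variable {n : ℕ} {Ω : Set (E n)}

lemma proj_norm_le (v p : E n) (hv : ‖v‖ = 1) : ‖p - ⟪p, v⟫ • v‖ ≤ ‖p‖ := by
  have hvv : ⟪v, v⟫ = 1 := by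
    rw [real_inner_self_eq_norm_mul_norm, hv, one_mul]
  have horth : ⟪p - ⟪p, v⟫ • v, ⟪p, v⟫ • v⟫ = 0 := by
    rw [inner_sub_left, real_inner_smul_right, real_inner_smul_right,
      real_inner_smul_left, hvv]
    ring
  have hsq : ‖p‖ ^ 2 = ‖p - ⟪p, v⟫ • v‖ ^ 2 + ‖⟪p, v⟫ • v‖ ^ 2 := by
    have := norm_add_sq_real (p - ⟪p, v⟫ • v) (⟪p, v⟫ • v)
    rw [sub_add_cancel, horth] at this
    linarith
  nlinarith [norm_nonneg (p - ⟪p, v⟫ • v), norm_nonneg p, sq_nonneg ‖⟪p, v⟫ • v‖]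

/-- Local joinability near a Lipschitz boundary point. -/
lemma local_join_boundary (hΩo : IsOpen Ω) {x₀ : E n}
    (hb : ∃ v : E n, ‖v‖ = 1 ∧ ∃ r : ℝ, 0 < r ∧ ∃ (K : ℝ≥0) (φ : E n → ℝ),
      LipschitzWith K φ ∧ ∀ y ∈ ball x₀ r, (y ∈ Ω ↔ ⟪y, v⟫ < φ (y - ⟪y, v⟫ • v))) :
    ∃ r' : ℝ, 0 < r' ∧ ∃ C : ℝ, 1 ≤ C ∧ ∀ y z : E n,
      y ∈ ball x₀ r' → y ∈ closure Ω → z ∈ ball x₀ r' → z ∈ closure Ω → y ≠ z →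
      ∃ T, 0 < T ∧ T ≤ C * ‖y - z‖ ∧ Join (closure Ω) y z T := by
  obtain ⟨v, hv, r, hr, K, φ, hφ, hchar⟩ := hb
  set Kr : ℝ := (K : ℝ) with hKrdef
  have hKr : 0 ≤ Kr := K.2
  have hvv : ⟪v, v⟫ = 1 := by
    rw [real_inner_self_eq_norm_mul_norm, hv, one_mul]
  have hvne : v ≠ 0 := by
    intro h; rw [h, norm_zero] at hv; exact one_ne_zero hv.symm
  have hφlip : ∀ a b : E n, φ a - φ b ≤ Kr * ‖a - b‖ := by
    intro a b
    have := hφ.dist_le_mul a b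
    rw [Real.dist_eq, dist_eq_norm] at this
    have := abs_le.1 this
    linarith [this.2]
  -- the closed characterization
  have hclose : ∀ w : E n, w ∈ closure Ω → w ∈ ball x₀ r → ⟪w, v⟫ ≤ φ (w - ⟪w, v⟫ • v) := by
    intro w hwc hwb
    by_contra hlt
    push_neg at hlt
    have hUopen : IsOpen (ball x₀ r ∩ {u : E n | φ (u - ⟪u, v⟫ • v) < ⟪u, v⟫}) := by
      apply isOpen_ball.inter
      have hπ : Continuous fun u : E n => u - ⟪u, v⟫ • v := by
        exact continuous_id.sub (by fun_prop)
      exact isOpen_lt (hφ.continuous.comp hπ) (continuous_id.inner continuous_const)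
    obtain ⟨q, hq, hqΩ⟩ := mem_closure_iff.1 hwc _ hUopen ⟨hwb, hlt⟩
    exact absurd ((hchar q hq.1).1 hqΩ) (not_lt.2 hq.2.le)
  have hopen : ∀ w : E n, w ∈ ball x₀ r → ⟪w, v⟫ < φ (w - ⟪w, v⟫ • v) → w ∈ closure Ω :=
    fun w hw hlt => subset_closure ((hchar w hw).2 hlt)
  set r' : ℝ := r / (4 * Kr + 6) with hr'def
  have hr' : 0 < r' := by positivity
  refine ⟨r', hr', 4 * Kr + 5, by linarith, ?_⟩
  intro y z hyb hyc hzb hzc hne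
  have hr'r : r' * (4 * Kr + 6) = r := by
    rw [hr'def]; field_simp
  have hsub : ball x₀ r' ⊆ ball x₀ r := by
    apply ball_subset_ball
    nlinarith [mul_nonneg hKr hr'.le]
  have hyzn : 0 < ‖y - z‖ := by rw [norm_pos_iff, sub_ne_zero]; exact hne
  have hyzb : ‖y - z‖ < 2 * r' := by
    have h1 : dist y x₀ < r' := mem_ball.1 hyb
    have h2 : dist z x₀ < r' := mem_ball.1 hzb
    calc ‖y - z‖ = dist y z := (dist_eq_norm y z).symm
      _ ≤ dist y x₀ + dist x₀ z := dist_triangle _ _ _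
      _ < r' + r' := by rw [dist_comm x₀ z]; linarith
      _ = 2 * r' := by ring
  set d : ℝ := (2 * Kr + 2) * ‖y - z‖ with hddef
  have hd : 0 < d := by positivity
  have hdr : d ≤ (4 * Kr + 4) * r' := by
    rw [hddef]; nlinarith
  -- inner products along vertical segments
  have hvert : ∀ (w : E n) (τ : ℝ), w ∈ closure Ω → w ∈ ball x₀ r' → 0 < τ → τ ≤ d →
      w - τ • v ∈ closure Ω := by
    intro w τ hwc hwb hτ hτd
    have hball : w - τ • v ∈ ball x₀ r := by
      rw [mem_ball, dist_eq_norm]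
      have he : w - τ • v - x₀ = (w - x₀) + (-τ) • v := by module
      calc ‖w - τ • v - x₀‖ = ‖(w - x₀) + (-τ) • v‖ := by rw [he]
        _ ≤ ‖w - x₀‖ + ‖(-τ) • v‖ := norm_add_le _ _
        _ = ‖w - x₀‖ + τ := by
              rw [norm_smul, hv, mul_one, Real.norm_eq_abs, abs_neg, abs_of_pos hτ]
        _ < r' + (4 * Kr + 4) * r' := by
            have := mem_ball.1 hwb; rw [dist_eq_norm] at this; linarith
        _ ≤ r := by nlinarith [mul_nonneg hKr hr'.le]
    apply hopen _ hball
    have hinner : ⟪w - τ • v, v⟫ = ⟪w, v⟫ - τ := by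
      rw [inner_sub_left, real_inner_smul_left, hvv, mul_one]
    have hproj : w - τ • v - ⟪w - τ • v, v⟫ • v = w - ⟪w, v⟫ • v := by
      rw [hinner, sub_smul]; module
    rw [hproj, hinner]
    have := hclose w hwc (hsub hwb)
    linarith
  -- membership of the three segments
  have hS1 : ∀ t ∈ Icc (0:ℝ) 1, y + t • ((y - d • v) - y) ∈ closure Ω := by
    intro t ht
    have hpt : y + t • ((y - d • v) - y) = y - (t * d) • v := by
      rw [mul_smul]; module
    rw [hpt]
    rcases eq_or_lt_of_le ht.1 with h0 | h0
    · rw [← h0]; simpa using hyc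
    · exact hvert y (t * d) hyc hyb (by positivity)
        (by nlinarith [ht.2])
  have hS3 : ∀ t ∈ Icc (0:ℝ) 1, (z - d • v) + t • (z - (z - d • v)) ∈ closure Ω := by
    intro t ht
    have hpt : (z - d • v) + t • (z - (z - d • v)) = z - ((1 - t) * d) • v := by
      rw [mul_smul]; module
    rw [hpt]
    rcases eq_or_lt_of_le ht.2 with h1 | h1
    · rw [h1]; simpa using hzc
    · exact hvert z ((1 - t) * d) hzc hzb (by nlinarith) (by nlinarith [ht.1])
  have hS2 : ∀ t ∈ Icc (0:ℝ) 1, (y - d • v) + t • ((z - d • v) - (y - d • v)) ∈ closure Ω := by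
    intro t ht
    obtain ⟨ht0, ht1⟩ := ht
    set w : E n := y + t • (z - y) - d • v with hwdef
    have hpt : (y - d • v) + t • ((z - d • v) - (y - d • v)) = w := by
      rw [hwdef]; module
    rw [hpt]
    have hball : w ∈ ball x₀ r := by
      rw [mem_ball, dist_eq_norm]
      have hwx : w - x₀ = ((1 - t) • (y - x₀) + t • (z - x₀)) + (-d) • v := by
        rw [hwdef]; module
      calc ‖w - x₀‖ ≤ ‖(1 - t) • (y - x₀) + t • (z - x₀)‖ + ‖(-d) • v‖ := by
            rw [hwx]; exact norm_add_le _ _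
        _ ≤ ((1 - t) * ‖y - x₀‖ + t * ‖z - x₀‖) + d := by
            have h3 : ‖(1 - t) • (y - x₀) + t • (z - x₀)‖
                ≤ (1 - t) * ‖y - x₀‖ + t * ‖z - x₀‖ := by
              refine le_trans (norm_add_le _ _) ?_
              rw [norm_smul, norm_smul, Real.norm_eq_abs, Real.norm_eq_abs,
                abs_of_nonneg (by linarith : (0:ℝ) ≤ 1 - t), abs_of_nonneg ht0]
            have h4 : ‖(-d) • v‖ = d := by
              rw [norm_smul, hv, mul_one, Real.norm_eq_abs, abs_neg, abs_of_pos hd]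
            linarith
        _ < r' + (4 * Kr + 4) * r' := by
            have h1 := mem_ball.1 hyb; rw [dist_eq_norm] at h1
            have h2 := mem_ball.1 hzb; rw [dist_eq_norm] at h2
            nlinarith
        _ ≤ r := by nlinarith [mul_nonneg hKr hr'.le]
    apply hopen _ hball
    have hinner : ⟪w, v⟫ = ⟪y, v⟫ + t * (⟪z, v⟫ - ⟪y, v⟫) - d := by
      rw [hwdef, inner_sub_left, inner_add_left, real_inner_smul_left, real_inner_smul_left,
        inner_sub_left, hvv, mul_one]
    have hproj : w - ⟪w, v⟫ • v
        = (y - ⟪y, v⟫ • v) + t • ((z - ⟪z, v⟫ • v) - (y - ⟪y, v⟫ • v)) := by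
      rw [hwdef, hinner]
      have : (⟪y, v⟫ + t * (⟪z, v⟫ - ⟪y, v⟫) - d) • v
          = ⟪y, v⟫ • v + t • ((⟪z, v⟫ - ⟪y, v⟫) • v) - d • v := by
        rw [sub_smul, add_smul, smul_smul]
      rw [this]
      have h2 : (⟪z, v⟫ - ⟪y, v⟫) • v = ⟪z, v⟫ • v - ⟪y, v⟫ • v := sub_smul _ _ _
      rw [h2]; module
    have hprojd : ‖(z - ⟪z, v⟫ • v) - (y - ⟪y, v⟫ • v)‖ ≤ ‖z - y‖ := by
      have he : (z - ⟪z, v⟫ • v) - (y - ⟪y, v⟫ • v) = (z - y) - ⟪z - y, v⟫ • v := by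
        rw [inner_sub_left, sub_smul]; module
      rw [he]
      exact proj_norm_le v (z - y) hv
    have hy' := hclose y hyc (hsub hyb)
    have hz' := hclose z hzc (hsub hzb)
    have hl1 : φ (y - ⟪y, v⟫ • v) - φ (w - ⟪w, v⟫ • v)
        ≤ Kr * (t * ‖z - y‖) := by
      refine le_trans (hφlip _ _) ?_
      apply mul_le_mul_of_nonneg_left _ hKr
      rw [hproj]
      have : (y - ⟪y, v⟫ • v) - ((y - ⟪y, v⟫ • v) + t • ((z - ⟪z, v⟫ • v) - (y - ⟪y, v⟫ • v)))
          = (-t) • ((z - ⟪z, v⟫ • v) - (y - ⟪y, v⟫ • v)) := by module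
      rw [this, norm_smul, Real.norm_eq_abs, abs_neg, abs_of_nonneg ht0]
      exact mul_le_mul_of_nonneg_left hprojd ht0
    have hl2 : φ (z - ⟪z, v⟫ • v) - φ (w - ⟪w, v⟫ • v)
        ≤ Kr * ((1 - t) * ‖z - y‖) := by
      refine le_trans (hφlip _ _) ?_
      apply mul_le_mul_of_nonneg_left _ hKr
      rw [hproj]
      have : (z - ⟪z, v⟫ • v) - ((y - ⟪y, v⟫ • v) + t • ((z - ⟪z, v⟫ • v) - (y - ⟪y, v⟫ • v)))
          = (1 - t) • ((z - ⟪z, v⟫ • v) - (y - ⟪y, v⟫ • v)) := by module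
      rw [this, norm_smul, Real.norm_eq_abs, abs_of_nonneg (by linarith)]
      exact mul_le_mul_of_nonneg_left hprojd (by linarith)
    have hnyz : ‖z - y‖ = ‖y - z‖ := norm_sub_rev z y
    set A := φ (w - ⟪w, v⟫ • v) with hAdef
    set N := ‖z - y‖ with hNdef
    have hinner' : ⟪w, v⟫ = (1 - t) * ⟪y, v⟫ + t * ⟪z, v⟫ - d := by rw [hinner]; ring
    have h5 : (1 - t) * ⟪y, v⟫ ≤ (1 - t) * φ (y - ⟪y, v⟫ • v) :=
      mul_le_mul_of_nonneg_left hy' (by linarith)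
    have h6 : t * ⟪z, v⟫ ≤ t * φ (z - ⟪z, v⟫ • v) := mul_le_mul_of_nonneg_left hz' ht0
    have h7 : (1 - t) * φ (y - ⟪y, v⟫ • v) ≤ (1 - t) * (A + Kr * (t * N)) :=
      mul_le_mul_of_nonneg_left (by linarith) (by linarith)
    have h8 : t * φ (z - ⟪z, v⟫ • v) ≤ t * (A + Kr * ((1 - t) * N)) :=
      mul_le_mul_of_nonneg_left (by linarith) ht0
    have h9 : 2 * (Kr * (t * (1 - t) * N)) ≤ Kr * N := by
      nlinarith [sq_nonneg (2 * t - 1), mul_nonneg hKr (norm_nonneg (z - y))]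
    have h10 : d = (2 * Kr + 2) * N := by rw [hddef, hNdef, norm_sub_rev]
    nlinarith [hinner', h5, h6, h7, h8, h9, h10, hyzn, hnyz]
  -- build the three joins
  have hJ1 : Join (closure Ω) y (y - d • v) d := by
    have hne1 : y ≠ y - d • v := by
      intro h
      have h2 : d • v = 0 := by
        have h3 : d • v = y - (y - d • v) := by module
        rw [h3, ← h, sub_self]
      exact (smul_ne_zero hd.ne' hvne) h2
    have := join_segment hne1 hS1
    have he : ‖(y - d • v) - y‖ = d := by
      have : (y - d • v) - y = (-d) • v := by module
      rw [this, norm_smul, hv, mul_one, Real.norm_eq_abs, abs_neg, abs_of_pos hd]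
    rwa [he] at this
  have hJ2 : Join (closure Ω) (y - d • v) (z - d • v) ‖y - z‖ := by
    have hne2 : y - d • v ≠ z - d • v := by
      intro h; apply hne; exact by
        have := congrArg (fun u => u + d • v) h
        simpa using this
    have := join_segment hne2 hS2
    have he : ‖(z - d • v) - (y - d • v)‖ = ‖y - z‖ := by
      rw [sub_sub_sub_cancel_right, norm_sub_rev]
    rwa [he] at this
  have hJ3 : Join (closure Ω) (z - d • v) z d := by
    have hne3 : z - d • v ≠ z := by
      intro h
      have h2 : d • v = 0 := by
        have h3 : d • v = z - (z - d • v) := by module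
        rw [h3, h, sub_self]
      exact (smul_ne_zero hd.ne' hvne) h2
    have := join_segment hne3 hS3
    have he : ‖z - (z - d • v)‖ = d := by
      have h3 : z - (z - d • v) = d • v := by module
      rw [h3, norm_smul, hv, mul_one, Real.norm_eq_abs, abs_of_pos hd]
    rwa [he] at this
  refine ⟨d + ‖y - z‖ + d, by positivity, ?_, ?_⟩
  · rw [hddef]; nlinarith
  · exact (( hJ1.trans hd.le (by positivity) hJ2).trans (by positivity) hd.le hJ3)

end Geometry
section Global

variable {n : ℕ} {Ω : Set (E n)}

/-- Local joinability around any point of `closure Ω`. -/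
lemma local_join (hΩo : IsOpen Ω) (hΩl : HasLipschitzBoundary Ω) :
    ∀ p : {p : E n // p ∈ closure Ω}, ∃ r' : ℝ, 0 < r' ∧ ∃ C : ℝ, 1 ≤ C ∧ ∀ y z : E n,
      y ∈ ball p.1 r' → y ∈ closure Ω → z ∈ ball p.1 r' → z ∈ closure Ω → y ≠ z →
      ∃ T, 0 < T ∧ T ≤ C * ‖y - z‖ ∧ Join (closure Ω) y z T := by
  rintro ⟨p, hp⟩
  rw [closure_eq_self_union_frontier] at hp
  rcases hp with hp | hp
  · -- interior point
    obtain ⟨ρ, hρ, hball⟩ := Metric.isOpen_iff.1 hΩo p hp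
    refine ⟨ρ, hρ, 1, le_rfl, ?_⟩
    intro y z hyb hyc hzb hzc hne
    have hseg : ∀ t ∈ Icc (0:ℝ) 1, y + t • (z - y) ∈ closure Ω := by
      intro t ht
      have hmem : y + t • (z - y) = (1 - t) • y + t • z := by module
      rw [hmem]
      exact subset_closure (hball (convex_ball p ρ hyb hzb (by linarith [ht.2])
        ht.1 (by ring)))
    have hJ := join_segment hne hseg
    refine ⟨‖z - y‖, by rw [norm_pos_iff, sub_ne_zero]; exact fun h => hne h.symm, ?_, hJ⟩
    rw [norm_sub_rev, one_mul]
  · exact local_join_boundary hΩo (hΩl p hp)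

/-- Uniform local joinability. -/
lemma uniform_local_join (hΩo : IsOpen Ω) (hΩb : IsBounded Ω)
    (hΩl : HasLipschitzBoundary Ω) :
    ∃ δ : ℝ, 0 < δ ∧ ∃ C₁ : ℝ, 1 ≤ C₁ ∧ ∀ y z : E n, y ∈ closure Ω → z ∈ closure Ω →
      ‖y - z‖ < δ → y ≠ z → ∃ T, 0 < T ∧ T ≤ C₁ * ‖y - z‖ ∧ Join (closure Ω) y z T := by
  have hcpt : IsCompact (closure Ω) := hΩb.isCompact_closure
  choose r' hr' C hC hjoin using local_join hΩo hΩl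
  have hcover : closure Ω ⊆ ⋃ p : {p : E n // p ∈ closure Ω}, ball p.1 (r' p) :=
    fun q hq => Set.mem_iUnion.2 ⟨⟨q, hq⟩, mem_ball_self (hr' _)⟩
  obtain ⟨t, ht⟩ := hcpt.elim_finite_subcover _ (fun p => isOpen_ball) hcover
  have hcover' : closure Ω ⊆ ⋃ p : {p // p ∈ t}, ball p.1.1 (r' p.1) := by
    intro q hq
    obtain ⟨p, hpt, hqp⟩ := Set.mem_iUnion₂.1 (ht hq)
    exact Set.mem_iUnion.2 ⟨⟨p, hpt⟩, hqp⟩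
  obtain ⟨δ, hδ, hleb⟩ := lebesgue_number_lemma_of_metric hcpt (fun _ => isOpen_ball) hcover'
  set C₁ : ℝ := ((t.sup fun p => ⌈C p⌉₊ : ℕ) : ℝ) + 1 with hC₁def
  have hC₁ : 1 ≤ C₁ := by
    rw [hC₁def]
    have := Nat.cast_nonneg (α := ℝ) (t.sup fun p => ⌈C p⌉₊)
    linarith
  have hC₁ge : ∀ p ∈ t, C p ≤ C₁ := by
    intro p hpt
    have h1 : C p ≤ (⌈C p⌉₊ : ℝ) := Nat.le_ceil _
    have h2 : ((⌈C p⌉₊ : ℕ) : ℝ) ≤ ((t.sup fun p => ⌈C p⌉₊ : ℕ) : ℝ) :=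
      Nat.cast_le.2 (Finset.le_sup (f := fun p => ⌈C p⌉₊) hpt)
    rw [hC₁def]; linarith
  refine ⟨δ, hδ, C₁, hC₁, ?_⟩
  intro y z hy hz hyz hne
  obtain ⟨p, hballp⟩ := hleb y hy
  have hyp : y ∈ ball p.1.1 (r' p.1) := hballp (mem_ball_self hδ)
  have hzp : z ∈ ball p.1.1 (r' p.1) := hballp (by
    rw [mem_ball, dist_eq_norm, norm_sub_rev]; exact hyz)
  obtain ⟨T, hT0, hTle, hTJ⟩ := hjoin p.1 y z hyp hy hzp hz hne
  refine ⟨T, hT0, ?_, hTJ⟩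
  exact le_trans hTle (mul_le_mul_of_nonneg_right (hC₁ge p.1 p.2) (norm_nonneg _))

/-- Global joinability with a uniform time bound. -/
lemma global_join (hΩo : IsOpen Ω) (hΩc : IsConnected Ω) (hΩb : IsBounded Ω)
    (hΩl : HasLipschitzBoundary Ω) :
    ∃ D : ℝ, 0 < D ∧ ∀ y z : E n, y ∈ closure Ω → z ∈ closure Ω →
      ∃ T, 0 ≤ T ∧ T ≤ D ∧ Join (closure Ω) y z T := by
  obtain ⟨δ, hδ, C₁, hC₁, hloc⟩ := uniform_local_join hΩo hΩb hΩl
  obtain ⟨x₀, hx₀⟩ := hΩc.nonempty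
  have hx₀c : x₀ ∈ closure Ω := subset_closure hx₀
  set P : Set (E n) := {z : E n | z ∈ closure Ω ∧ ∃ T, 0 ≤ T ∧ Join (closure Ω) x₀ z T}
    with hPdef
  have hstep : ∀ w z : E n, w ∈ P → z ∈ closure Ω → ‖w - z‖ < δ → z ∈ P := by
    intro w z hw hz hwz
    rcases eq_or_ne w z with rfl | hne
    · exact hw
    · obtain ⟨T', hT'0, -, hT'J⟩ := hloc w z hw.1 hz hwz hne
      obtain ⟨T, hT0, hTJ⟩ := hw.2
      exact ⟨hz, T + T', by linarith, hTJ.trans hT0 hT'0.le hT'J⟩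
  have hP : ∀ z ∈ closure Ω, z ∈ P := by
    by_contra hcon
    push_neg at hcon
    obtain ⟨z₀, hz₀c, hz₀P⟩ := hcon
    have hpre : IsPreconnected (closure Ω) := hΩc.isPreconnected.closure
    obtain ⟨q, hqc, hqu, hqv⟩ := hpre (⋃ w ∈ P, ball w δ)
      (⋃ w ∈ {w : E n | w ∈ closure Ω ∧ w ∉ P}, ball w δ)
      (isOpen_biUnion fun _ _ => isOpen_ball) (isOpen_biUnion fun _ _ => isOpen_ball)
      (by
        intro q hq
        by_cases hqP : q ∈ P
        · exact Or.inl (Set.mem_biUnion hqP (mem_ball_self hδ))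
        · exact Or.inr (Set.mem_biUnion ⟨hq, hqP⟩ (mem_ball_self hδ)))
      ⟨x₀, hx₀c, Set.mem_biUnion ⟨hx₀c, 0, le_rfl, Join.refl hx₀c⟩ (mem_ball_self hδ)⟩
      ⟨z₀, hz₀c, Set.mem_biUnion ⟨hz₀c, hz₀P⟩ (mem_ball_self hδ)⟩
    obtain ⟨w₁, hw₁P, hqw₁⟩ := Set.mem_iUnion₂.1 hqu
    obtain ⟨w₂, hw₂, hqw₂⟩ := Set.mem_iUnion₂.1 hqv
    have hqP : q ∈ P := hstep w₁ q hw₁P hqc (by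
      rw [mem_ball, dist_eq_norm] at hqw₁; rw [norm_sub_rev]; exact hqw₁)
    exact hw₂.2 (hstep q w₂ hqP hw₂.1 (by
      rw [mem_ball, dist_eq_norm] at hqw₂; exact hqw₂))
  -- uniform bound on joins to x₀
  have hcpt : IsCompact (closure Ω) := hΩb.isCompact_closure
  have hcover : closure Ω ⊆ ⋃ p : {p : E n // p ∈ closure Ω}, ball p.1 δ :=
    fun q hq => Set.mem_iUnion.2 ⟨⟨q, hq⟩, mem_ball_self hδ⟩
  obtain ⟨t, ht⟩ := hcpt.elim_finite_subcover _ (fun _ => isOpen_ball) hcover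
  choose TT hTT0 hTTJ using fun p : {p : E n // p ∈ closure Ω} => (hP p.1 p.2).2
  set D₀ : ℝ := ((t.sup fun p => ⌈TT p⌉₊ : ℕ) : ℝ) + C₁ * δ with hD₀def
  have hC₁δ0 : 0 < C₁ * δ := mul_pos (lt_of_lt_of_le one_pos hC₁) hδ
  have hD₀pos : 0 < D₀ := by
    rw [hD₀def]
    have := Nat.cast_nonneg (α := ℝ) (t.sup fun p => ⌈TT p⌉₊)
    linarith
  have hone : ∀ y ∈ closure Ω, ∃ T, 0 ≤ T ∧ T ≤ D₀ ∧ Join (closure Ω) x₀ y T := by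
    intro y hy
    obtain ⟨p, hpt, hyp⟩ := Set.mem_iUnion₂.1 (ht hy)
    have hTTle : TT p ≤ ((t.sup fun p => ⌈TT p⌉₊ : ℕ) : ℝ) :=
      le_trans (Nat.le_ceil _) (Nat.cast_le.2 (Finset.le_sup (f := fun p => ⌈TT p⌉₊) hpt))
    have hC₁δ : 0 ≤ C₁ * δ := le_of_lt (mul_pos (lt_of_lt_of_le one_pos hC₁) hδ)
    rcases eq_or_ne p.1 y with rfl | hne
    · exact ⟨TT p, hTT0 p, by rw [hD₀def]; linarith, hTTJ p⟩
    · obtain ⟨T', hT'0, hT'le, hT'J⟩ := hloc p.1 y p.2 hy (by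
        rw [mem_ball, dist_eq_norm] at hyp; rw [norm_sub_rev]; exact hyp) hne
      have hT'δ : T' ≤ C₁ * δ := by
        refine le_trans hT'le (mul_le_mul_of_nonneg_left ?_ (by linarith))
        rw [mem_ball, dist_eq_norm] at hyp; rw [norm_sub_rev]; exact hyp.le
      exact ⟨TT p + T', by linarith [hTT0 p], by rw [hD₀def]; linarith [hTTle],
        (hTTJ p).trans (hTT0 p) hT'0.le hT'J⟩
  refine ⟨2 * D₀, by linarith, ?_⟩
  intro y z hy hz
  obtain ⟨T₁, hT₁0, hT₁le, hT₁J⟩ := hone y hy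
  obtain ⟨T₂, hT₂0, hT₂le, hT₂J⟩ := hone z hz
  exact ⟨T₁ + T₂, by linarith, by linarith,
    (hT₁J.symm hT₁0).trans hT₁0 hT₂0 hT₂J⟩

end Global
/-- under (SH), the value function is dominated by `L`,
Lipschitz on `cl Ω`, and attains the boundary datum. -/
theorem value_function_dominated_lipschitz_boundary
    {n : ℕ} (Ω : Set (E n)) (L : E n → E n → ℝ) (θ₁ θ₂ : ℝ → ℝ) (c₀ : ℝ) (g : E n → ℝ)
    (hΩo : IsOpen Ω) (hΩc : IsConnected Ω) (hΩb : IsBounded Ω)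
    (hΩl : HasLipschitzBoundary Ω) (hL : IsTonelli L θ₁ θ₂ c₀)
    (hg : ∀ x ∈ frontier Ω, ∀ y ∈ frontier Ω, g x - g y ≤ manePot L Ω y x)
    (hc : critValue L Ω ≤ 0) :
    (∀ x ∈ closure Ω, ∀ x' ∈ closure Ω,
      valueFun L Ω g x' - valueFun L Ω g x ≤ manePot L Ω x x') ∧
    (∃ K : ℝ≥0, LipschitzOnWith K (valueFun L Ω g) (closure Ω)) ∧
    (∀ x ∈ frontier Ω, valueFun L Ω g x = g x) := by
  classical
  obtain ⟨M, hM0, hM⟩ := hL.sl₁.exists_minorant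
  have hθ₂1 : 0 ≤ θ₂ 1 := hL.sl₂.2.1 1 zero_le_one
  -- the Mañé potential at a point of `closure Ω` with itself is nonpositive
  have hΦself : ∀ x : E n, x ∈ closure Ω → BddBelow (phiSet L Ω x x) →
      manePot L Ω x x ≤ 0 := by
    intro x hx hbdd
    by_contra hpos
    push_neg at hpos
    rcases le_or_gt (L x 0) 0 with hh | hh
    · have h1 := csInf_le hbdd (const_mem_phiSet hx one_pos)
      have : manePot L Ω x x ≤ 1 * L x 0 := h1
      linarith
    · have htt : 0 < manePot L Ω x x / (2 * L x 0) := by positivity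
      have h1 : manePot L Ω x x ≤ manePot L Ω x x / (2 * L x 0) * L x 0 :=
        csInf_le hbdd (const_mem_phiSet hx htt)
      have h2 : manePot L Ω x x / (2 * L x 0) * L x 0 = manePot L Ω x x / 2 := by
        field_simp
      rw [h2] at h1
      linarith
  by_cases hfr : frontier Ω = ∅
  · -- degenerate case : the space is a single point
    have hsub : ∀ x x' : E n, x = x' := by
      intro x x'
      by_contra hne
      haveI : Nontrivial (E n) := ⟨⟨x, x', hne⟩⟩
      haveI : PreconnectedSpace (E n) :=
        ⟨(convex_univ : Convex ℝ (Set.univ : Set (E n))).isPreconnected⟩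
      have hcl : IsClosed Ω := by
        have h1 : closure Ω = Ω := by
          rw [closure_eq_self_union_frontier, hfr, Set.union_empty]
        rw [← h1]; exact isClosed_closure
      have huniv : Ω = Set.univ :=
        IsClopen.eq_univ (⟨hcl, hΩo⟩ : IsClopen Ω) hΩc.nonempty
      rw [huniv] at hΩb
      exact NormedSpace.unbounded_univ ℝ (E n) hΩb
    have hu0 : ∀ x : E n, valueFun L Ω g x = 0 := by
      intro x
      rw [valueFun, hfr, Set.image_empty, Real.sInf_empty]
    refine ⟨?_, ⟨0, ?_⟩, ?_⟩
    · intro x hx x' hx'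
      cases hsub x x'
      rw [hu0, sub_self]
      have hne : (phiSet L Ω x x).Nonempty := ⟨1 * L x 0, const_mem_phiSet hx one_pos⟩
      exact le_csInf hne fun v hv => phiSet_self_nonneg hL hM0 hM hc hx hv
    · rw [lipschitzOnWith_iff_dist_le_mul]
      intro x hx y hy
      cases hsub x y
      simp
    · intro x hx
      rw [hfr] at hx
      exact absurd hx (Set.notMem_empty x)
  · -- main case
    obtain ⟨y₀, hy₀⟩ := Set.nonempty_iff_ne_empty.2 hfr
    have hfrc : frontier Ω ⊆ closure Ω := frontier_subset_closure
    have hy₀c : y₀ ∈ closure Ω := hfrc hy₀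
    obtain ⟨D, hD, hglob⟩ := global_join hΩo hΩc hΩb hΩl
    obtain ⟨δ, hδ, C₁, hC₁, hloc⟩ := uniform_local_join hΩo hΩb hΩl
    set C₂ : ℝ := max C₁ (2 * D / δ) with hC₂def
    have hC₂0 : 0 ≤ C₂ := le_trans (by linarith) (le_max_left _ _)
    set Kb : ℝ := C₂ * θ₂ 1 with hKbdef
    have hKb0 : 0 ≤ Kb := mul_nonneg hC₂0 hθ₂1
    have hJT : ∀ x y : E n, x ∈ closure Ω → y ∈ closure Ω → x ≠ y →
        ∃ T, 0 < T ∧ T ≤ C₂ * ‖x - y‖ ∧ Join (closure Ω) x y T := by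
      intro x y hx hy hne
      rcases lt_or_ge ‖x - y‖ δ with hlt | hge
      · obtain ⟨T, h1, h2, h3⟩ := hloc x y hx hy hlt hne
        exact ⟨T, h1, le_trans h2 (mul_le_mul_of_nonneg_right (le_max_left _ _)
          (norm_nonneg _)), h3⟩
      · obtain ⟨T, h0, h2, h3⟩ := hglob x y hx hy
        have hT0 : 0 < T := by
          rcases eq_or_lt_of_le h0 with h | h
          · rw [← h] at h3
            exact absurd h3.eq_of_zero hne
          · exact h
        refine ⟨T, hT0, ?_, h3⟩
        calc T ≤ D := h2
          _ ≤ (2 * D / δ) * ‖x - y‖ := by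
              rw [div_mul_eq_mul_div, le_div_iff₀ hδ]
              nlinarith [mul_nonneg hD.le (by linarith : (0:ℝ) ≤ ‖x - y‖ - δ)]
          _ ≤ C₂ * ‖x - y‖ := mul_le_mul_of_nonneg_right (le_max_right _ _) (norm_nonneg _)
    have hmem : ∀ x y : E n, x ∈ closure Ω → y ∈ closure Ω → x ≠ y →
        ∃ a ∈ phiSet L Ω x y, a ≤ Kb * ‖x - y‖ := by
      intro x y hx hy hne
      obtain ⟨T, hT0, hTle, hTJ⟩ := hJT x y hx hy hne
      obtain ⟨a, ha, hale⟩ := join_action hL hT0 hTJ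
      refine ⟨a, ⟨T, hT0, ha⟩, ?_⟩
      have h1 : T * θ₂ 1 ≤ C₂ * ‖x - y‖ * θ₂ 1 :=
        mul_le_mul_of_nonneg_right hTle hθ₂1
      rw [hKbdef]
      nlinarith
    have hne' : ∀ x y : E n, x ∈ closure Ω → y ∈ closure Ω →
        (phiSet L Ω x y).Nonempty := by
      intro x y hx hy
      rcases eq_or_ne x y with rfl | hne
      · exact ⟨1 * L x 0, const_mem_phiSet hx one_pos⟩
      · obtain ⟨a, ha, -⟩ := hmem x y hx hy hne
        exact ⟨a, ha⟩
    have hbdd : ∀ x y : E n, x ∈ closure Ω → y ∈ closure Ω →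
        BddBelow (phiSet L Ω x y) := by
      intro x y hx hy
      obtain ⟨w, hw⟩ := hne' y x hy hx
      refine ⟨-w, fun v hv => ?_⟩
      have := phiSet_self_nonneg hL hM0 hM hc hx (phiSet_add hv hw)
      linarith
    have hΦle : ∀ x y : E n, x ∈ closure Ω → y ∈ closure Ω →
        manePot L Ω x y ≤ Kb * ‖x - y‖ := by
      intro x y hx hy
      rcases eq_or_ne x y with rfl | hne
      · rw [sub_self, norm_zero, mul_zero]
        exact hΦself x hx (hbdd x x hx hx)
      · obtain ⟨a, ha, hale⟩ := hmem x y hx hy hne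
        exact le_trans (csInf_le (hbdd x y hx hy) ha) hale
    have hΦtri : ∀ x y z : E n, x ∈ closure Ω → y ∈ closure Ω → z ∈ closure Ω →
        manePot L Ω x z ≤ manePot L Ω x y + manePot L Ω y z := by
      intro x y z hx hy hz
      have key : ∀ v ∈ phiSet L Ω x y, ∀ w ∈ phiSet L Ω y z,
          manePot L Ω x z ≤ v + w := fun v hv w hw =>
        csInf_le (hbdd x z hx hz) (phiSet_add hv hw)
      have h1 : ∀ v ∈ phiSet L Ω x y, manePot L Ω x z - v ≤ manePot L Ω y z := fun v hv =>
        le_csInf (hne' y z hy hz) fun w hw => by linarith [key v hv w hw]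
      have h2 : manePot L Ω x z - manePot L Ω y z ≤ manePot L Ω x y :=
        le_csInf (hne' x y hx hy) fun v hv => by linarith [h1 v hv]
      linarith
    have hΦnn : ∀ x y : E n, x ∈ closure Ω → y ∈ closure Ω →
        0 ≤ manePot L Ω x y + manePot L Ω y x := by
      intro x y hx hy
      have h1 : ∀ v ∈ phiSet L Ω x y, -manePot L Ω y x ≤ v := by
        intro v hv
        have h2 : ∀ w ∈ phiSet L Ω y x, -v ≤ w := by
          intro w hw
          linarith [phiSet_self_nonneg hL hM0 hM hc hx (phiSet_add hv hw)]
        have h3 : -v ≤ manePot L Ω y x := le_csInf (hne' y x hy hx) h2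
        linarith
      have h4 : -manePot L Ω y x ≤ manePot L Ω x y := le_csInf (hne' x y hx hy) h1
      linarith
    obtain ⟨R, hR⟩ := Metric.isBounded_iff.1 hΩb.closure
    have hR' : ∀ a b : E n, a ∈ closure Ω → b ∈ closure Ω → ‖a - b‖ ≤ R := by
      intro a b ha hb
      rw [← dist_eq_norm]; exact hR ha hb
    have hR0 : 0 ≤ R := le_trans (norm_nonneg (y₀ - y₀)) (hR' y₀ y₀ hy₀c hy₀c)
    have hlb : ∀ x : E n, x ∈ closure Ω →
        ∀ b ∈ (fun y => g y + manePot L Ω y x) '' frontier Ω,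
        g y₀ - Kb * R - Kb * R ≤ b := by
      rintro x hx b ⟨y, hy, rfl⟩
      show g y₀ - Kb * R - Kb * R ≤ g y + manePot L Ω y x
      have hyc := hfrc hy
      have hg1 : g y₀ - g y ≤ manePot L Ω y y₀ := hg y₀ hy₀ y hy
      have hΦ1 : manePot L Ω y y₀ ≤ Kb * R :=
        le_trans (hΦle y y₀ hyc hy₀c) (mul_le_mul_of_nonneg_left (hR' y y₀ hyc hy₀c) hKb0)
      have hΦ2 : -manePot L Ω x y ≤ manePot L Ω y x := by
        linarith [hΦnn x y hx hyc]
      have hΦ3 : manePot L Ω x y ≤ Kb * R :=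
        le_trans (hΦle x y hx hyc) (mul_le_mul_of_nonneg_left (hR' x y hx hyc) hKb0)
      linarith
    have hbddim : ∀ x : E n, x ∈ closure Ω →
        BddBelow ((fun y => g y + manePot L Ω y x) '' frontier Ω) :=
      fun x hx => ⟨_, hlb x hx⟩
    have hneim : ∀ x : E n, ((fun y => g y + manePot L Ω y x) '' frontier Ω).Nonempty :=
      fun x => ⟨_, Set.mem_image_of_mem _ hy₀⟩
    have part1 : ∀ x ∈ closure Ω, ∀ x' ∈ closure Ω,
        valueFun L Ω g x' - valueFun L Ω g x ≤ manePot L Ω x x' := by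
      intro x hx x' hx'
      have h4 : valueFun L Ω g x' - manePot L Ω x x' ≤ valueFun L Ω g x := by
        apply le_csInf (hneim x)
        rintro b ⟨y, hy, rfl⟩
        show valueFun L Ω g x' - manePot L Ω x x' ≤ g y + manePot L Ω y x
        have h2 : valueFun L Ω g x' ≤ g y + manePot L Ω y x' :=
          csInf_le (hbddim x' hx') (Set.mem_image_of_mem _ hy)
        have h3 := hΦtri y x x' (hfrc hy) hx hx'
        linarith
      linarith
    refine ⟨part1, ⟨Kb.toNNReal, ?_⟩, ?_⟩
    · rw [lipschitzOnWith_iff_dist_le_mul]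
      intro x hx y hy
      rw [Real.dist_eq, Real.coe_toNNReal _ hKb0, dist_eq_norm, abs_le]
      constructor
      · have h1 := part1 x hx y hy
        have h2 : manePot L Ω x y ≤ Kb * ‖x - y‖ := hΦle x y hx hy
        linarith
      · have h1 := part1 y hy x hx
        have h2 : manePot L Ω y x ≤ Kb * ‖x - y‖ := by
          rw [norm_sub_rev]; exact hΦle y x hy hx
        linarith
    · intro x hx
      have hxc := hfrc hx
      have hle : valueFun L Ω g x ≤ g x := by
        have h0 : manePot L Ω x x ≤ 0 := hΦself x hxc (hbdd x x hxc hxc)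
        have h1 : valueFun L Ω g x ≤ g x + manePot L Ω x x :=
          csInf_le (hbddim x hxc) (Set.mem_image_of_mem _ hx)
        linarith
      have hge : g x ≤ valueFun L Ω g x := by
        apply le_csInf (hneim x)
        rintro b ⟨y, hy, rfl⟩
        show g x ≤ g y + manePot L Ω y x
        linarith [hg x hx y hy]
      linarith

end HJpaper
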